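/- Let beta > 0, rho > 0, xi > 0 and fix 0 < a < infinity. The expected cost of the stationary policy that always places the next relay at distance a on a line of Exp(beta) length is at most (1/(beta a)) (xi + e^{rho a} - 1) + (e^{rho a} - 1); in particular the optimal value function J_xi(s) of the sequential relay placement MDP satisfies J_xi(s) <= (1/(beta a))(xi + e^{rho a} - 1) + (e^{rho a} - 1) for all s in (0,1]. (Key computational fact: integral_0^infinity beta e^{-beta z} (z/a)(xi + e^{rho a} - 1) dz = (1/(beta a))(xi + e^{rho a} - 1).) -/

import Mathlib

open Real MeasureTheory

/-- State transition of the placement MDP when a relay is placed at distance `a`. -/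
noncomputable def nextState (ρ a s : ℝ) : ℝ :=
  s * exp (ρ * a) / (1 + s * exp (ρ * a))

/-- State after `n` relays have been placed (each at distance `a` from the previous). -/
noncomputable def stateIter (ρ a s : ℝ) (n : ℕ) : ℝ :=
  (nextState ρ a)^[n] s

/-- Total cost along a line of realized length `l` under the stationary policy placing
each successive relay at distance `a`, starting from state `s`:
`⌊l/a⌋` relays are placed (cost `ξ + s_k (e^{ρa}-1)` each) and then the sink is placed. -/
noncomputable def stationaryPolicyCost (ρ ξ a s l : ℝ) : ℝ :=
  let n := ⌊l / a⌋₊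
  n * ξ + (∑ k ∈ Finset.range n, stateIter ρ a s k) * (exp (ρ * a) - 1) +
    stateIter ρ a s n * (exp (ρ * (l - n * a)) - 1)

lemma stateIter_mem (ρ a : ℝ) {s : ℝ} (hs0 : 0 ≤ s) (hs1 : s ≤ 1) (n : ℕ) :
    0 ≤ stateIter ρ a s n ∧ stateIter ρ a s n ≤ 1 := by
  induction n with
  | zero => exact ⟨hs0, hs1⟩
  | succ n ih =>
    rw [stateIter, Function.iterate_succ_apply']
    have ht0 : 0 ≤ (nextState ρ a)^[n] s := ih.1
    set t := (nextState ρ a)^[n] s with ht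
    have hE : 0 < exp (ρ * a) := exp_pos _
    have hden : 0 < 1 + t * exp (ρ * a) := by positivity
    constructor
    · exact div_nonneg (by positivity) hden.le
    · rw [nextState, div_le_one hden]; linarith

lemma cost_bounds (ρ ξ a : ℝ) (hρ : 0 < ρ) (hξ : 0 < ξ) (ha : 0 < a)
    {s l : ℝ} (hs : s ∈ Set.Ioc (0 : ℝ) 1) (hl : 0 < l) :
    0 ≤ stationaryPolicyCost ρ ξ a s l ∧
      stationaryPolicyCost ρ ξ a s l ≤ (l / a) * (ξ + exp (ρ * a) - 1) + (exp (ρ * a) - 1) := by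
  have hs0 : 0 ≤ s := hs.1.le
  have hs1 : s ≤ 1 := hs.2
  have hE1 : 1 ≤ exp (ρ * a) := one_le_exp (by positivity)
  set n : ℕ := ⌊l / a⌋₊ with hn
  have hna : (n : ℝ) * a ≤ l := by
    have h1 : (n : ℝ) ≤ l / a := Nat.floor_le (by positivity)
    calc (n : ℝ) * a ≤ (l / a) * a := by nlinarith
    _ = l := by field_simp
  have hlt : l - (n : ℝ) * a ≤ a := by
    have h2 : l / a < n + 1 := Nat.lt_floor_add_one (l / a)
    have : l < ((n : ℝ) + 1) * a := by
      have := (div_lt_iff₀ ha).mp h2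
      linarith
    linarith
  have hexp1 : 1 ≤ exp (ρ * (l - (n : ℝ) * a)) := one_le_exp (by nlinarith)
  have hexp2 : exp (ρ * (l - (n : ℝ) * a)) ≤ exp (ρ * a) :=
    exp_le_exp.2 (by nlinarith)
  have hsum0 : 0 ≤ ∑ k ∈ Finset.range n, stateIter ρ a s k :=
    Finset.sum_nonneg fun k _ => (stateIter_mem ρ a hs0 hs1 k).1
  have hsum1 : (∑ k ∈ Finset.range n, stateIter ρ a s k) ≤ n := by
    calc (∑ k ∈ Finset.range n, stateIter ρ a s k) ≤ ∑ _k ∈ Finset.range n, (1 : ℝ) :=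
        Finset.sum_le_sum fun k _ => (stateIter_mem ρ a hs0 hs1 k).2
      _ = n := by simp
  have hsn := stateIter_mem ρ a hs0 hs1 n
  have hnl : (n : ℝ) ≤ l / a := Nat.floor_le (by positivity)
  constructor
  · have : (0:ℝ) ≤ (n : ℝ) * ξ := by positivity
    have h2 : (0:ℝ) ≤ (∑ k ∈ Finset.range n, stateIter ρ a s k) * (exp (ρ * a) - 1) := by
      apply mul_nonneg hsum0; linarith
    have h3 : (0:ℝ) ≤ stateIter ρ a s n * (exp (ρ * (l - (n:ℝ) * a)) - 1) := by
      apply mul_nonneg hsn.1; linarith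
    show (0:ℝ) ≤ (n:ℝ) * ξ + _ + _
    linarith
  · show (n:ℝ) * ξ + (∑ k ∈ Finset.range n, stateIter ρ a s k) * (exp (ρ * a) - 1) +
      stateIter ρ a s n * (exp (ρ * (l - (n:ℝ) * a)) - 1) ≤ _
    have h2 : (∑ k ∈ Finset.range n, stateIter ρ a s k) * (exp (ρ * a) - 1)
        ≤ (n : ℝ) * (exp (ρ * a) - 1) := by nlinarith
    have h3 : stateIter ρ a s n * (exp (ρ * (l - (n:ℝ) * a)) - 1) ≤ exp (ρ * a) - 1 := by
      nlinarith [hsn.1, hsn.2]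
    have h4 : (n : ℝ) * ξ + (n : ℝ) * (exp (ρ * a) - 1) ≤ (l / a) * (ξ + exp (ρ * a) - 1) := by
      have : (n : ℝ) * (ξ + exp (ρ * a) - 1) ≤ (l / a) * (ξ + exp (ρ * a) - 1) := by
        apply mul_le_mul_of_nonneg_right hnl; linarith
      linarith
    linarith

lemma integral_id_mul_exp (β : ℝ) (hβ : 0 < β) :
    ∫ z in Set.Ioi (0 : ℝ), z * exp (-β * z) = 1 / β ^ 2 := by
  have h := Real.integral_rpow_mul_exp_neg_mul_Ioi (a := 2) (r := β) two_pos hβ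
  have h2 : Real.Gamma 2 = 1 := by
    simpa using Real.Gamma_nat_eq_factorial 1
  rw [h2, mul_one] at h
  have h3 : ((1:ℝ) / β) ^ (2:ℝ) = 1 / β ^ 2 := by
    rw [show (2:ℝ) = ((2:ℕ):ℝ) by norm_num, rpow_natCast, div_pow, one_pow]
  rw [h3] at h
  rw [← h]
  refine setIntegral_congr_fun measurableSet_Ioi fun t ht => ?_
  rw [show (2:ℝ) - 1 = 1 by norm_num, rpow_one, neg_mul]

lemma integral_exp_neg_mul (β : ℝ) (hβ : 0 < β) :
    ∫ z in Set.Ioi (0 : ℝ), exp (-β * z) = 1 / β := by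
  have h := Real.integral_rpow_mul_exp_neg_mul_Ioi (a := 1) (r := β) one_pos hβ
  rw [Real.Gamma_one, mul_one, rpow_one] at h
  rw [← h]
  refine setIntegral_congr_fun measurableSet_Ioi fun t ht => ?_
  rw [sub_self, rpow_zero, one_mul, neg_mul]

lemma integrableOn_id_mul_exp (β : ℝ) (hβ : 0 < β) :
    IntegrableOn (fun z : ℝ => z * exp (-β * z)) (Set.Ioi 0) := by
  have h := integrableOn_rpow_mul_exp_neg_mul_rpow (s := 1) (p := 1)
    (by norm_num) one_pos hβ
  simpa [rpow_one] using h

theorem stmt_16 (β ρ ξ a : ℝ) (hβ : 0 < β) (hρ : 0 < ρ) (hξ : 0 < ξ) (ha : 0 < a)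
    (J : ℝ → ℝ)
    -- the optimal value function is bounded by the expected cost of any policy,
    -- in particular by that of the stationary policy with step `a`:
    (hJ : ∀ s ∈ Set.Ioc (0 : ℝ) 1,
      J s ≤ ∫ l in Set.Ioi (0 : ℝ), β * exp (-β * l) * stationaryPolicyCost ρ ξ a s l) :
    (∫ z in Set.Ioi (0 : ℝ), β * exp (-β * z) * ((z / a) * (ξ + exp (ρ * a) - 1)) =
      (1 / (β * a)) * (ξ + exp (ρ * a) - 1)) ∧
    ∀ s ∈ Set.Ioc (0 : ℝ) 1,
      J s ≤ (1 / (β * a)) * (ξ + exp (ρ * a) - 1) + (exp (ρ * a) - 1) := by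
  set C : ℝ := ξ + exp (ρ * a) - 1 with hC
  have hE1 : 1 ≤ exp (ρ * a) := one_le_exp (by positivity)
  have hC0 : 0 < C := by rw [hC]; linarith
  have hpart1 : ∫ z in Set.Ioi (0 : ℝ), β * exp (-β * z) * ((z / a) * C)
      = (1 / (β * a)) * C := by
    have : (fun z : ℝ => β * exp (-β * z) * ((z / a) * C))
        = fun z => (β * C / a) * (z * exp (-β * z)) := by
      funext z; ring
    rw [this, integral_const_mul, integral_id_mul_exp β hβ]
    field_simp
  refine ⟨hpart1, fun s hs => ?_⟩
  -- the dominating function and its integral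
  have hgint : IntegrableOn (fun l : ℝ => β * exp (-β * l) * ((l / a) * C + (exp (ρ * a) - 1)))
      (Set.Ioi 0) := by
    have h1 : IntegrableOn (fun l : ℝ => (β * C / a) * (l * exp (-β * l))) (Set.Ioi 0) :=
      (integrableOn_id_mul_exp β hβ).const_mul _
    have h2 : IntegrableOn (fun l : ℝ => (β * (exp (ρ * a) - 1)) * exp (-β * l)) (Set.Ioi 0) :=
      (exp_neg_integrableOn_Ioi 0 hβ).const_mul _
    have hfun : (fun l : ℝ => β * exp (-β * l) * ((l / a) * C + (exp (ρ * a) - 1)))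
        = fun l => (β * C / a) * (l * exp (-β * l)) + (β * (exp (ρ * a) - 1)) * exp (-β * l) := by
      funext l; ring
    rw [IntegrableOn, hfun]
    exact h1.add h2
  have hgval : ∫ l in Set.Ioi (0 : ℝ), β * exp (-β * l) * ((l / a) * C + (exp (ρ * a) - 1))
      = (1 / (β * a)) * C + (exp (ρ * a) - 1) := by
    have hsplit : (fun l : ℝ => β * exp (-β * l) * ((l / a) * C + (exp (ρ * a) - 1)))
        = fun l => (β * C / a) * (l * exp (-β * l)) + (β * (exp (ρ * a) - 1)) * exp (-β * l) := by
      funext l; ring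
    rw [hsplit, integral_add ((integrableOn_id_mul_exp β hβ).const_mul _)
      ((exp_neg_integrableOn_Ioi 0 hβ).const_mul _), integral_const_mul, integral_const_mul,
      integral_id_mul_exp β hβ, integral_exp_neg_mul β hβ]
    field_simp
  have hmono : (∫ l in Set.Ioi (0 : ℝ), β * exp (-β * l) * stationaryPolicyCost ρ ξ a s l)
      ≤ ∫ l in Set.Ioi (0 : ℝ), β * exp (-β * l) * ((l / a) * C + (exp (ρ * a) - 1)) := by
    apply integral_mono_of_nonneg
    · rw [Filter.EventuallyLE, ae_restrict_iff' measurableSet_Ioi]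
      filter_upwards with l hl
      have := (cost_bounds ρ ξ a hρ hξ ha hs hl).1
      have hβe : 0 < β * exp (-β * l) := by positivity
      simpa using mul_nonneg hβe.le this
    · exact hgint
    · rw [Filter.EventuallyLE, ae_restrict_iff' measurableSet_Ioi]
      filter_upwards with l hl
      have h := (cost_bounds ρ ξ a hρ hξ ha hs hl).2
      have hβe : 0 < β * exp (-β * l) := by positivity
      exact mul_le_mul_of_nonneg_left h hβe.le
  calc J s ≤ _ := hJ s hs
    _ ≤ _ := hmono
    _ = (1 / (β * a)) * C + (exp (ρ * a) - 1) := hgval
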